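/- Let G : ℕ → ℂ satisfy G(i+2) = G(i+1) + G(i) for all i ≥ 0, and let w ∈ ℂ with w³ − 2w² − 2w + 1 ≠ 0. Then for every nonnegative integer k, ∑_{j=0}^{k} w^j · G(j)² = ( −(2w² + 2w − 1)·G(0)² − (2w² − w)·G(1)² + w²·G(2)² + (2w² + 2w − 1)·w^{k+1}·G(k+1)² + (2w − 1)·w^{k+2}·G(k+2)² − w^{k+3}·G(k+3)² ) / (w³ − 2w² − 2w + 1). -/

import Mathlib

theorem weighted_square_sum (G : ℕ → ℂ) (hG : ∀ i, G (i + 2) = G (i + 1) + G i)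
    (w : ℂ) (hw : w ^ 3 - 2 * w ^ 2 - 2 * w + 1 ≠ 0) (k : ℕ) :
    ∑ j ∈ Finset.range (k + 1), w ^ j * G j ^ 2 =
      (-(2 * w ^ 2 + 2 * w - 1) * G 0 ^ 2 - (2 * w ^ 2 - w) * G 1 ^ 2 + w ^ 2 * G 2 ^ 2
        + (2 * w ^ 2 + 2 * w - 1) * w ^ (k + 1) * G (k + 1) ^ 2
        + (2 * w - 1) * w ^ (k + 2) * G (k + 2) ^ 2
        - w ^ (k + 3) * G (k + 3) ^ 2) / (w ^ 3 - 2 * w ^ 2 - 2 * w + 1) := by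
  induction k with
  | zero =>
    rw [Finset.sum_range_one]
    have h3 : G 3 = G 2 + G 1 := hG 1
    have h2 : G 2 = G 1 + G 0 := hG 0
    rw [h3, h2]
    rw [eq_div_iff hw]
    ring
  | succ n ih =>
    rw [Finset.sum_range_succ, ih]
    have h1 : G (n + 4) = G (n + 3) + G (n + 2) := hG (n + 2)
    have h2 : G (n + 3) = G (n + 2) + G (n + 1) := hG (n + 1)
    have h3 : G (n + 1 + 1) = G (n + 2) := by norm_num
    have h4 : G (n + 1 + 2) = G (n + 3) := by norm_num
    have h5 : G (n + 1 + 3) = G (n + 4) := by norm_num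
    rw [h3, h4, h5, h1, h2]
    rw [div_add' _ _ _ hw, div_eq_div_iff hw hw]
    ring
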